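/- For every Fourier frequency k with 0 ≤ k ≤ ω/Cp (where admissibility k² ± λ₁λ₂ ≠ 0 holds), as well as for k = ω/Cs, there exists δ₀ > 0 such that for all overlaps δ with 0 < δ < δ₀, the convergence factor of the classical Schwarz method satisfies ρ_cla(k, ω, Cp, Cs, δ) = 1 (stagnation of the low frequencies). -/

import Mathlib

open Complex

/-- The convergence factor `ρ_cla(k, ω, Cp, Cs, δ) = max(|r₊|, |r₋|)` of the classical
Schwarz method for the time-harmonic Navier equations, where
`r± = X²/2 + e^{−δ(λ₁+λ₂)} ± (1/2)√(X²(X² + 4e^{−δ(λ₁+λ₂)}))`,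
`X = ((k² + λ₁λ₂)/(k² − λ₁λ₂))(e^{−λ₁δ} − e^{−λ₂δ})`,
`λ₁ = √(k² − ω²/Cs²)`, `λ₂ = √(k² − ω²/Cp²)` (principal complex square roots). -/
noncomputable def rhoCla (Cp Cs ω k δ : ℝ) : ℝ :=
  let l1 : ℂ := ((k ^ 2 - ω ^ 2 / Cs ^ 2 : ℝ) : ℂ) ^ (1 / 2 : ℂ)
  let l2 : ℂ := ((k ^ 2 - ω ^ 2 / Cp ^ 2 : ℝ) : ℂ) ^ (1 / 2 : ℂ)
  let X : ℂ := ((k : ℂ) ^ 2 + l1 * l2) / ((k : ℂ) ^ 2 - l1 * l2)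
      * (Complex.exp (-l1 * δ) - Complex.exp (-l2 * δ))
  let E : ℂ := Complex.exp (-(δ : ℂ) * (l1 + l2))
  let s : ℂ := (X ^ 2 * (X ^ 2 + 4 * E)) ^ (1 / 2 : ℂ)
  max ‖X ^ 2 / 2 + E + s / 2‖ ‖X ^ 2 / 2 + E - s / 2‖


lemma cpow_half_nonpos (x : ℝ) (hx : x ≤ 0) :
    ((x : ℂ)) ^ (1/2 : ℂ) = (Real.sqrt (-x) : ℂ) * Complex.I := by
  have h2 : (1/2 : ℂ) = (2⁻¹ : ℂ) := by norm_num
  rw [h2]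
  apply Complex.ext
  · rw [Complex.cpow_inv_two_re]
    simp [Complex.norm_real, Real.norm_eq_abs, abs_of_nonpos hx]
  · rw [Complex.cpow_inv_two_im_eq_sqrt (by simp)]
    simp only [Complex.norm_real, Real.norm_eq_abs, abs_of_nonpos hx, Complex.ofReal_re]
    rw [show (-x - x)/2 = -x by ring]
    simp

lemma sq_half (z : ℂ) : (z ^ (1/2 : ℂ)) ^ 2 = z := by
  have : (1/2 : ℂ) = ((2:ℕ)⁻¹ : ℂ) := by norm_num
  rw [this]
  exact Complex.cpow_nat_inv_pow z two_ne_zero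

lemma key_unit (E X : ℂ) (t : ℝ) (hE : ‖E‖ = 1) (hX : X ^ 2 = (t : ℂ) * E)
    (ht0 : t ≤ 0) (ht4 : -4 ≤ t) :
    max (‖X^2/2 + E + (X^2*(X^2+4*E))^(1/2:ℂ)/2‖)
        (‖X^2/2 + E - (X^2*(X^2+4*E))^(1/2:ℂ)/2‖) = 1 := by
  have hEne : E ≠ 0 := by
    intro h; rw [h] at hE; simp at hE
  set s : ℂ := (X^2*(X^2+4*E))^(1/2:ℂ) with hs
  have hs2 : s ^ 2 = X^2*(X^2+4*E) := sq_half _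
  set u : ℂ := s / E with hu
  have hu2 : u ^ 2 = ((t*(t+4) : ℝ) : ℂ) := by
    rw [hu, div_pow, hs2, hX]
    field_simp
    push_cast
    ring
  have hure : u.re = 0 := by
    have h1 : u.re ^ 2 - u.im ^ 2 = t*(t+4) := by
      have := congrArg Complex.re hu2
      simp [pow_two, Complex.mul_re] at this
      nlinarith [this]
    have h2 : 2 * u.re * u.im = 0 := by
      have := congrArg Complex.im hu2
      simp [pow_two, Complex.mul_im] at this
      nlinarith [this]
    have htt : t*(t+4) ≤ 0 := by nlinarith
    rcases mul_eq_zero.1 (by nlinarith [h2] : u.re * u.im = 0) with h | h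
    · exact h
    · nlinarith [h1, sq_nonneg u.re]
  have huim : u.im ^ 2 = -(t*(t+4)) := by
    have h1 : u.re ^ 2 - u.im ^ 2 = t*(t+4) := by
      have := congrArg Complex.re hu2
      simp [pow_two, Complex.mul_re] at this
      nlinarith [this]
    nlinarith [h1, hure]
  have hse : s = E * u := by rw [hu]; field_simp
  have habs : ∀ w : ℂ, w.re = 0 → w.im ^ 2 = -(t*(t+4))/4 →
      ‖E * (((t/2 + 1 : ℝ) : ℂ) + w)‖ = 1 := by
    intro w hre him
    rw [norm_mul, hE, one_mul]
    have hz : ‖((t/2 + 1 : ℝ) : ℂ) + w‖ ^ 2 = 1 := by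
      rw [Complex.sq_norm, Complex.normSq_apply]
      simp [Complex.add_re, Complex.add_im, hre]
      nlinarith [him]
    nlinarith [norm_nonneg (((t/2 + 1 : ℝ) : ℂ) + w), hz]
  have e1 : X^2/2 + E + s/2 = E * (((t/2 + 1 : ℝ) : ℂ) + u/2) := by
    rw [hX, hse]; push_cast; ring
  have e2 : X^2/2 + E - s/2 = E * (((t/2 + 1 : ℝ) : ℂ) + (-(u/2))) := by
    rw [hX, hse]; push_cast; ring
  rw [e1, e2, habs (u/2) (by simp [hure]) (by simp; nlinarith [huim]),
    habs (-(u/2)) (by simp [hure]) (by simp; nlinarith [huim]), max_self]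

lemma key_real (q : ℝ) (hq0 : 0 ≤ q) (hq1 : q ≤ 1) :
    max (‖(1-(q:ℂ))^2/2 + (q:ℂ)
          + ((1-(q:ℂ))^2*((1-(q:ℂ))^2+4*(q:ℂ)))^(1/2:ℂ)/2‖)
        (‖(1-(q:ℂ))^2/2 + (q:ℂ)
          - ((1-(q:ℂ))^2*((1-(q:ℂ))^2+4*(q:ℂ)))^(1/2:ℂ)/2‖) = 1 := by
  have hbase : (1-(q:ℂ))^2*((1-(q:ℂ))^2+4*(q:ℂ)) = ((((1-q)*(1+q))^2 : ℝ) : ℂ) := by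
    push_cast; ring
  have hy : (0:ℝ) ≤ (1-q)*(1+q) := by nlinarith
  have hsv : ((((1-q)*(1+q))^2 : ℝ) : ℂ)^(1/2:ℂ) = (((1-q)*(1+q) : ℝ) : ℂ) := by
    rw [show (1/2:ℂ) = (((1/2:ℝ)):ℂ) by norm_num,
      ← Complex.ofReal_cpow (sq_nonneg _), ← Real.sqrt_eq_rpow, Real.sqrt_sq hy]
  rw [hbase, hsv]
  have h1 : (1-(q:ℂ))^2/2 + (q:ℂ) + (((1-q)*(1+q) : ℝ) : ℂ)/2 = 1 := by push_cast; ring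
  have h2 : (1-(q:ℂ))^2/2 + (q:ℂ) - (((1-q)*(1+q) : ℝ) : ℂ)/2 = ((q^2 : ℝ) : ℂ) := by
    push_cast; ring
  rw [h1, h2]
  simp only [norm_one, Complex.norm_real, Real.norm_eq_abs, _root_.abs_of_nonneg (sq_nonneg q)]
  exact max_eq_left (by nlinarith)


set_option maxHeartbeats 1000000 in
/-- for low Fourier frequencies `0 ≤ k ≤ ω/Cp` (under the admissibility
conditions `k² ± λ₁λ₂ ≠ 0`), as well as for `k = ω/Cs`, the classical Schwarz method
stagnates: `ρ_cla(k, ω, Cp, Cs, δ) = 1` for all sufficiently small overlaps `δ > 0`. -/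
theorem schwarz_low_frequencies_stagnate
    (μ lam ρ ω : ℝ) (hμ : 0 < μ) (hlam : 0 < lam) (hρ : 0 < ρ) (hω : 0 < ω)
    (Cp Cs : ℝ) (hCp : Cp = Real.sqrt ((lam + 2 * μ) / ρ)) (hCs : Cs = Real.sqrt (μ / ρ))
    (k : ℝ)
    (l1 l2 : ℂ)
    (hl1 : l1 = ((k ^ 2 - ω ^ 2 / Cs ^ 2 : ℝ) : ℂ) ^ (1 / 2 : ℂ))
    (hl2 : l2 = ((k ^ 2 - ω ^ 2 / Cp ^ 2 : ℝ) : ℂ) ^ (1 / 2 : ℂ))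
    (hk : (0 ≤ k ∧ k ≤ ω / Cp) ∨ k = ω / Cs)
    (hadmp : (k : ℂ) ^ 2 + l1 * l2 ≠ 0) (hadmm : (k : ℂ) ^ 2 - l1 * l2 ≠ 0) :
    ∃ δ₀ > (0 : ℝ), ∀ δ : ℝ, 0 < δ → δ < δ₀ → rhoCla Cp Cs ω k δ = 1 := by
  have hCs0 : 0 < Cs := by
    rw [hCs]; exact Real.sqrt_pos.2 (div_pos hμ hρ)
  have hCp0 : 0 < Cp := by
    rw [hCp]; exact Real.sqrt_pos.2 (div_pos (by linarith) hρ)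
  have hCsCp : Cs < Cp := by
    rw [hCs, hCp]
    apply Real.sqrt_lt_sqrt (le_of_lt (div_pos hμ hρ))
    rw [div_lt_div_iff_of_pos_right hρ]
    linarith
  rcases hk with ⟨hk0, hk1⟩ | hk2
  · -- propagative case 0 ≤ k ≤ ω/Cp
    have hB : k ^ 2 - ω ^ 2 / Cp ^ 2 ≤ 0 := by
      have h1 : k ^ 2 ≤ (ω / Cp) ^ 2 := by nlinarith
      rw [div_pow] at h1
      linarith
    have hA : k ^ 2 - ω ^ 2 / Cs ^ 2 ≤ 0 := by
      have h1 : ω ^ 2 / Cp ^ 2 ≤ ω ^ 2 / Cs ^ 2 := by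
        apply div_le_div_of_nonneg_left (by positivity) (by positivity) (by nlinarith)
      linarith
    set a : ℝ := Real.sqrt (-(k ^ 2 - ω ^ 2 / Cs ^ 2)) with ha
    set b : ℝ := Real.sqrt (-(k ^ 2 - ω ^ 2 / Cp ^ 2)) with hb
    have hl1a : l1 = (a : ℂ) * Complex.I := by rw [hl1]; exact cpow_half_nonpos _ hA
    have hl2b : l2 = (b : ℂ) * Complex.I := by rw [hl2]; exact cpow_half_nonpos _ hB
    have hll : l1 * l2 = -(((a * b : ℝ)) : ℂ) := by
      rw [hl1a, hl2b]
      push_cast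
      rw [show (a:ℂ) * Complex.I * ((b:ℂ) * Complex.I) = (a:ℂ)*(b:ℂ)*(Complex.I^2) by ring,
        Complex.I_sq]
      ring
    have hplus : ((k : ℂ) ^ 2 + l1 * l2) = ((k ^ 2 - a * b : ℝ) : ℂ) := by
      rw [hll]; push_cast; ring
    have hminus : ((k : ℂ) ^ 2 - l1 * l2) = ((k ^ 2 + a * b : ℝ) : ℂ) := by
      rw [hll]; push_cast; ring
    set C : ℝ := (k ^ 2 - a * b) / (k ^ 2 + a * b) with hCdef
    have hCeq : ((k : ℂ) ^ 2 + l1 * l2) / ((k : ℂ) ^ 2 - l1 * l2) = ((C : ℝ) : ℂ) := by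
      rw [hplus, hminus, hCdef, Complex.ofReal_div]
    set M : ℝ := |C| * |b - a| / 2 with hM
    have hM0 : 0 ≤ M := by positivity
    refine ⟨1 / (M + 1), by positivity, fun δ hδ0 hδ1 => ?_⟩
    rw [rhoCla]
    simp only [← hl1, ← hl2]
    set θ : ℝ := (b - a) * δ / 2 with hθdef
    set t : ℝ := -4 * C ^ 2 * Real.sin θ ^ 2 with htdef
    have hEarg : -(δ : ℂ) * (l1 + l2) = ((-((a + b) * δ) : ℝ) : ℂ) * Complex.I := by
      rw [hl1a, hl2b]; push_cast; ring
    have hE : ‖Complex.exp (-(δ : ℂ) * (l1 + l2))‖ = 1 := by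
      rw [hEarg, Complex.norm_exp]
      simp
    set P : ℂ := Complex.exp (-(δ : ℂ) * (l1 + l2) / 2) with hP
    have hP2 : P ^ 2 = Complex.exp (-(δ : ℂ) * (l1 + l2)) := by
      rw [hP, ← Complex.exp_nat_mul]
      congr 1
      push_cast
      ring
    have he1 : Complex.exp (-l1 * (δ : ℂ)) = P * Complex.exp ((θ : ℂ) * Complex.I) := by
      rw [hP, ← Complex.exp_add]
      congr 1
      rw [hl1a, hl2b, hθdef]
      push_cast
      ring
    have he2 : Complex.exp (-l2 * (δ : ℂ)) = P * Complex.exp (-(θ : ℂ) * Complex.I) := by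
      rw [hP, ← Complex.exp_add]
      congr 1
      rw [hl1a, hl2b, hθdef]
      push_cast
      ring
    have hdiff : Complex.exp ((θ : ℂ) * Complex.I) - Complex.exp (-(θ : ℂ) * Complex.I)
        = 2 * ((Real.sin θ : ℝ) : ℂ) * Complex.I := by
      rw [Complex.exp_mul_I, Complex.exp_mul_I, Complex.cos_neg, Complex.sin_neg,
        Complex.ofReal_sin]
      ring
    have hX2 : (((k : ℂ) ^ 2 + l1 * l2) / ((k : ℂ) ^ 2 - l1 * l2)
        * (Complex.exp (-l1 * (δ:ℂ)) - Complex.exp (-l2 * (δ:ℂ)))) ^ 2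
        = ((t : ℝ) : ℂ) * Complex.exp (-(δ : ℂ) * (l1 + l2)) := by
      rw [hCeq, he1, he2, ← mul_sub, hdiff]
      calc ((C:ℂ) * (P * (2 * ((Real.sin θ : ℝ):ℂ) * Complex.I))) ^ 2
          = (C:ℂ) ^ 2 * (4 * ((Real.sin θ : ℝ):ℂ) ^ 2) * Complex.I ^ 2 * P ^ 2 := by ring
        _ = ((t : ℝ) : ℂ) * Complex.exp (-(δ : ℂ) * (l1 + l2)) := by
            rw [Complex.I_sq, hP2, htdef]; push_cast; ring
    have ht0 : t ≤ 0 := by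
      rw [htdef]; nlinarith [sq_nonneg (C * Real.sin θ)]
    have ht4 : -4 ≤ t := by
      have hsin : |Real.sin θ| ≤ |θ| := Real.abs_sin_le_abs
      have hθabs : |θ| = |b - a| * δ / 2 := by
        rw [hθdef, abs_div, abs_mul, abs_of_pos hδ0]
        simp
      have hMδ1 : M * δ ≤ M * (1 / (M + 1)) :=
        mul_le_mul_of_nonneg_left hδ1.le hM0
      have hMδ2 : M * (1 / (M + 1)) ≤ 1 := by
        rw [mul_one_div]
        apply div_le_one_of_le₀ (by linarith) (by linarith)
      have habs1 : |C * Real.sin θ| ≤ 1 := by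
        rw [abs_mul]
        calc |C| * |Real.sin θ| ≤ |C| * |θ| :=
              mul_le_mul_of_nonneg_left hsin (abs_nonneg C)
          _ = M * δ := by rw [hθabs, hM]; ring
          _ ≤ 1 := le_trans hMδ1 hMδ2
      have hsq : (C * Real.sin θ) ^ 2 ≤ 1 := by
        nlinarith [abs_nonneg (C * Real.sin θ), _root_.sq_abs (C * Real.sin θ)]
      rw [htdef]
      nlinarith [hsq]
    exact key_unit _ _ t hE hX2 ht0 ht4
  · -- k = ω/Cs
    have hksq : k ^ 2 = ω ^ 2 / Cs ^ 2 := by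
      rw [hk2, div_pow]
    have hl1z : l1 = 0 := by
      rw [hl1, show (k ^ 2 - ω ^ 2 / Cs ^ 2 : ℝ) = 0 by rw [hksq]; ring]
      simp only [Complex.ofReal_zero]
      exact Complex.zero_cpow (by norm_num)
    set c : ℝ := k ^ 2 - ω ^ 2 / Cp ^ 2 with hc
    have hcpos : 0 < c := by
      rw [hc, hksq]
      have h1 : Cs ^ 2 < Cp ^ 2 := by nlinarith
      have h2 : ω ^ 2 / Cp ^ 2 < ω ^ 2 / Cs ^ 2 := by
        apply div_lt_div_of_pos_left (by positivity) (by positivity) h1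
      linarith
    set r : ℝ := Real.sqrt c with hr
    have hrpos : 0 < r := Real.sqrt_pos.2 hcpos
    have hl2r : l2 = ((r : ℝ) : ℂ) := by
      rw [hl2, show (1/2:ℂ) = (((1/2:ℝ)):ℂ) by norm_num,
        ← Complex.ofReal_cpow hcpos.le, ← Real.sqrt_eq_rpow]
    have hkne : (k : ℂ) ^ 2 ≠ 0 := by
      rw [hl1z] at hadmm; simpa using hadmm
    refine ⟨1, one_pos, fun δ hδ0 hδ1 => ?_⟩
    rw [rhoCla]
    simp only [← hl1, ← hc, ← hl2]
    set q : ℝ := Real.exp (-(r * δ)) with hq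
    have hq0 : 0 ≤ q := (Real.exp_pos _).le
    have hq1 : q ≤ 1 := by
      rw [hq]
      apply Real.exp_le_one_iff.2
      nlinarith
    have hXeq : ((k : ℂ) ^ 2 + l1 * l2) / ((k : ℂ) ^ 2 - l1 * l2)
        * (Complex.exp (-l1 * δ) - Complex.exp (-l2 * δ)) = 1 - (q : ℂ) := by
      rw [hl1z, hl2r]
      rw [show -((r:ℝ):ℂ) * (δ:ℂ) = ((-(r * δ) : ℝ) : ℂ) by push_cast; ring,
        ← Complex.ofReal_exp, ← hq]
      field_simp
      simp only [zero_mul, add_zero, sub_zero, neg_zero, Complex.exp_zero]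
      exact mul_div_cancel_left₀ _ hkne
    have hEeq : Complex.exp (-(δ : ℂ) * (l1 + l2)) = (q : ℂ) := by
      rw [hl1z, hl2r,
        show -(δ:ℂ) * (0 + ((r:ℝ):ℂ)) = ((-(r * δ) : ℝ) : ℂ) by push_cast; ring,
        ← Complex.ofReal_exp, ← hq]
    rw [hXeq, hEeq]
    exact key_real q hq0 hq1
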